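/- A nonlinear contravariant connection D written locally as D^{dx^i} = π^{is} ∂/∂x^s − A^i_s ∂/∂ξ_s is Poisson (satisfies [[D^γ, #α^], β^] = [[D^γ, α^], #β^] for all 1-forms) if and only if π^{ms} ∂π^{ij}/∂x^s − (∂A^m_s/∂ξ_i) π^{sj} − (∂A^m_s/∂ξ_j) π^{is} = 0 for all indices. -/

import Mathlib

/-- Partial derivative in the base (`x`) direction, `p = (x, ξ)`. -/
noncomputable def pdx {n : ℕ} (k : Fin n)
    (f : (Fin n → ℝ) × (Fin n → ℝ) → ℝ) (p : (Fin n → ℝ) × (Fin n → ℝ)) : ℝ :=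
  fderiv ℝ f p (Pi.single k 1, 0)

/-- Partial derivative in the fibre (`ξ`) direction. -/
noncomputable def pdxi {n : ℕ} (k : Fin n)
    (f : (Fin n → ℝ) × (Fin n → ℝ) → ℝ) (p : (Fin n → ℝ) × (Fin n → ℝ)) : ℝ :=
  fderiv ℝ f p (0, Pi.single k 1)

/-- Partial derivative of a function of `x` only. -/
noncomputable def pd {n : ℕ} (k : Fin n) (f : (Fin n → ℝ) → ℝ) (x : Fin n → ℝ) : ℝ :=
  fderiv ℝ f x (Pi.single k 1)

/-- The nonlinear contravariant connection `D^{dx^m} = π^{ms} ∂/∂x^s − A^m_s ∂/∂ξ_s`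
acting on a function on the formal neighborhood `(T*M, Z)`. -/
noncomputable def Dop {n : ℕ} (π : Fin n → Fin n → (Fin n → ℝ) → ℝ)
    (A : Fin n → Fin n → (Fin n → ℝ) × (Fin n → ℝ) → ℝ) (m : Fin n)
    (F : (Fin n → ℝ) × (Fin n → ℝ) → ℝ) (p : (Fin n → ℝ) × (Fin n → ℝ)) : ℝ :=
  ∑ s, π m s p.1 * pdx s F p - ∑ s, A m s p * pdxi s F p

/-- The fibrewise linear function `(#dx^i)^ = π^{is} ξ_s`. -/
noncomputable def Ph {n : ℕ} (π : Fin n → Fin n → (Fin n → ℝ) → ℝ) (i : Fin n)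
    (p : (Fin n → ℝ) × (Fin n → ℝ)) : ℝ :=
  ∑ s, π i s p.1 * p.2 s

namespace NLC
variable {n : ℕ}

abbrev Pt (n : ℕ) := (Fin n → ℝ) × (Fin n → ℝ)

/-! ### smoothness helpers -/

lemma smooth_fderiv_apply {E : Type*} [NormedAddCommGroup E] [NormedSpace ℝ E]
    (f : E → ℝ) (hf : ContDiff ℝ (⊤ : ℕ∞) f) (v : E) :
    ContDiff ℝ (⊤ : ℕ∞) (fun p => fderiv ℝ f p v) :=
  (hf.fderiv_right (by simp)).clm_apply contDiff_const

lemma smooth_pd (f : (Fin n → ℝ) → ℝ) (hf : ContDiff ℝ (⊤ : ℕ∞) f) (k : Fin n) :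
    ContDiff ℝ (⊤ : ℕ∞) (pd k f) :=
  smooth_fderiv_apply f hf _

lemma smooth_pdx (f : Pt n → ℝ) (hf : ContDiff ℝ (⊤ : ℕ∞) f) (k : Fin n) :
    ContDiff ℝ (⊤ : ℕ∞) (pdx k f) :=
  smooth_fderiv_apply f hf _

lemma smooth_pdxi (f : Pt n → ℝ) (hf : ContDiff ℝ (⊤ : ℕ∞) f) (k : Fin n) :
    ContDiff ℝ (⊤ : ℕ∞) (pdxi k f) :=
  smooth_fderiv_apply f hf _

lemma smooth_fst (g : (Fin n → ℝ) → ℝ) (hg : ContDiff ℝ (⊤ : ℕ∞) g) :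
    ContDiff ℝ (⊤ : ℕ∞) (fun q : Pt n => g q.1) :=
  hg.comp contDiff_fst

lemma smooth_snd_coord (t : Fin n) :
    ContDiff ℝ (⊤ : ℕ∞) (fun q : Pt n => q.2 t) :=
  ((ContinuousLinearMap.proj t).comp (ContinuousLinearMap.snd ℝ (Fin n → ℝ) (Fin n → ℝ))).contDiff

/-! ### directional derivative computations -/

lemma fd_snd (t : Fin n) (p : Pt n) (u v : Fin n → ℝ) :
    fderiv ℝ (fun q : Pt n => q.2 t) p (u, v) = v t := by
  have : (fun q : Pt n => q.2 t)
      = ((ContinuousLinearMap.proj t).comp (ContinuousLinearMap.snd ℝ (Fin n → ℝ) (Fin n → ℝ))) := rfl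
  rw [this, ContinuousLinearMap.fderiv]
  rfl

lemma fd_fst (g : (Fin n → ℝ) → ℝ) (p : Pt n)
    (hg : DifferentiableAt ℝ g p.1) (u v : Fin n → ℝ) :
    fderiv ℝ (fun q : Pt n => g q.1) p (u, v) = fderiv ℝ g p.1 u := by
  have := (hg.hasFDerivAt.comp p (hasFDerivAt_fst (p := p))).fderiv
  rw [show (fun q : Pt n => g q.1) = g ∘ Prod.fst from rfl, this]
  rfl

lemma fd_mul (f g : Pt n → ℝ) (p : Pt n) (hf : DifferentiableAt ℝ f p)
    (hg : DifferentiableAt ℝ g p) (w : Pt n) :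
    fderiv ℝ (fun q => f q * g q) p w = fderiv ℝ f p w * g p + f p * fderiv ℝ g p w := by
  rw [fderiv_fun_mul hf hg]
  simp only [ContinuousLinearMap.add_apply, ContinuousLinearMap.smul_apply, smul_eq_mul]
  ring

lemma fd_sum {ι : Type*} [Fintype ι] (f : ι → Pt n → ℝ) (p : Pt n)
    (hf : ∀ t, DifferentiableAt ℝ (f t) p) (w : Pt n) :
    fderiv ℝ (fun q => ∑ t, f t q) p w = ∑ t, fderiv ℝ (f t) p w := by
  rw [fderiv_fun_sum (fun t _ => hf t)]
  simp

lemma fd_sub (f g : Pt n → ℝ) (p : Pt n) (hf : DifferentiableAt ℝ f p)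
    (hg : DifferentiableAt ℝ g p) (w : Pt n) :
    fderiv ℝ (fun q => f q - g q) p w = fderiv ℝ f p w - fderiv ℝ g p w := by
  rw [fderiv_fun_sub hf hg]; rfl

lemma fd_add (f g : Pt n → ℝ) (p : Pt n) (hf : DifferentiableAt ℝ f p)
    (hg : DifferentiableAt ℝ g p) (w : Pt n) :
    fderiv ℝ (fun q => f q + g q) p w = fderiv ℝ f p w + fderiv ℝ g p w := by
  rw [fderiv_fun_add hf hg]; rfl

/-! ### the fibrewise-linear functions -/

/-- generic fibrewise linear function -/
noncomputable def Hf (g : Fin n → (Fin n → ℝ) → ℝ) : Pt n → ℝ :=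
  fun q => ∑ t, g t q.1 * q.2 t

lemma smooth_Hf (g : Fin n → (Fin n → ℝ) → ℝ) (hg : ∀ t, ContDiff ℝ (⊤ : ℕ∞) (g t)) :
    ContDiff ℝ (⊤ : ℕ∞) (Hf g) :=
  ContDiff.sum fun t _ => (smooth_fst (g t) (hg t)).mul (smooth_snd_coord t)

lemma fd_Hf (g : Fin n → (Fin n → ℝ) → ℝ) (hg : ∀ t, ContDiff ℝ (⊤ : ℕ∞) (g t))
    (p : Pt n) (u v : Fin n → ℝ) :
    fderiv ℝ (Hf g) p (u, v)
      = ∑ t, (fderiv ℝ (g t) p.1 u * p.2 t + g t p.1 * v t) := by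
  rw [show Hf g = fun q => ∑ t, (fun q : Pt n => g t q.1 * q.2 t) q from rfl]
  rw [fd_sum _ p (fun t => ((smooth_fst (g t) (hg t)).mul (smooth_snd_coord t)).differentiable
      (by simp) |>.differentiableAt)]
  refine Finset.sum_congr rfl fun t _ => ?_
  rw [fd_mul _ _ p (((smooth_fst (g t) (hg t))).differentiable (by simp) |>.differentiableAt)
    ((smooth_snd_coord t).differentiable (by simp) |>.differentiableAt)]
  rw [fd_fst (g t) p (((hg t).differentiable (by simp)).differentiableAt), fd_snd]

lemma Ph_eq_Hf (π : Fin n → Fin n → (Fin n → ℝ) → ℝ) (i : Fin n) : Ph π i = Hf (π i) := rfl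

lemma pdxi_Hf (g : Fin n → (Fin n → ℝ) → ℝ) (hg : ∀ t, ContDiff ℝ (⊤ : ℕ∞) (g t))
    (k : Fin n) (p : Pt n) :
    pdxi k (Hf g) p = g k p.1 := by
  rw [pdxi, fd_Hf g hg]
  simp [Pi.single_apply, mul_ite, Finset.sum_ite_eq']

lemma pdx_Hf (g : Fin n → (Fin n → ℝ) → ℝ) (hg : ∀ t, ContDiff ℝ (⊤ : ℕ∞) (g t))
    (k : Fin n) (p : Pt n) :
    pdx k (Hf g) p = ∑ t, pd k (g t) p.1 * p.2 t := by
  rw [pdx, fd_Hf g hg]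
  simp [pd]

lemma pdxi_fst (g : (Fin n → ℝ) → ℝ) (hg : ContDiff ℝ (⊤ : ℕ∞) g) (k : Fin n) (p : Pt n) :
    pdxi k (fun q : Pt n => g q.1) p = 0 := by
  rw [pdxi, fd_fst g p ((hg.differentiable (by simp)).differentiableAt)]
  simp

lemma pdx_fst (g : (Fin n → ℝ) → ℝ) (hg : ContDiff ℝ (⊤ : ℕ∞) g) (k : Fin n) (p : Pt n) :
    pdx k (fun q : Pt n => g q.1) p = pd k g p.1 := by
  rw [pdx, fd_fst g p ((hg.differentiable (by simp)).differentiableAt)]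
  rfl

end NLC
namespace NLC
variable {n : ℕ} (π : Fin n → Fin n → (Fin n → ℝ) → ℝ)
  (A : Fin n → Fin n → (Fin n → ℝ) × (Fin n → ℝ) → ℝ)

/-- explicit formula for `Dop π A m (Ph π i)` -/
noncomputable def Efun (m i : Fin n) : Pt n → ℝ :=
  fun q => ∑ s, π m s q.1 * (∑ t, pd s (π i t) q.1 * q.2 t) - ∑ s, A m s q * π i s q.1

variable (hπ : ∀ i j, ContDiff ℝ (⊤ : ℕ∞) (π i j))
  (hA : ∀ i s, ContDiff ℝ (⊤ : ℕ∞) (A i s))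

section
include hπ hA

lemma smooth_Dop (m : Fin n) (F : Pt n → ℝ) (hF : ContDiff ℝ (⊤ : ℕ∞) F) :
    ContDiff ℝ (⊤ : ℕ∞) (Dop π A m F) := by
  unfold Dop
  exact (ContDiff.sum fun s _ => (smooth_fst _ (hπ m s)).mul (smooth_pdx F hF s)).sub
    (ContDiff.sum fun s _ => (hA m s).mul (smooth_pdxi F hF s))

lemma smooth_Efun (m i : Fin n) : ContDiff ℝ (⊤ : ℕ∞) (Efun π A m i) := by
  unfold Efun
  refine ContDiff.sub (ContDiff.sum fun s _ => (smooth_fst _ (hπ m s)).mul ?_)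
    (ContDiff.sum fun s _ => (hA m s).mul (smooth_fst _ (hπ i s)))
  exact ContDiff.sum fun t _ => (smooth_fst _ (smooth_pd _ (hπ i t) s)).mul (smooth_snd_coord t)

end

lemma Dop_mul (m : Fin n) (G F : Pt n → ℝ) (hG : ContDiff ℝ (⊤ : ℕ∞) G)
    (hF : ContDiff ℝ (⊤ : ℕ∞) F) (q : Pt n) :
    Dop π A m (fun r => G r * F r) q = Dop π A m G q * F q + G q * Dop π A m F q := by
  have hG' := (hG.differentiable (by simp)).differentiableAt (x := q)
  have hF' := (hF.differentiable (by simp)).differentiableAt (x := q)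
  unfold Dop
  simp only [pdx, pdxi, fd_mul G F q hG' hF']
  simp only [mul_add, Finset.sum_add_distrib]
  rw [show (∑ s, π m s q.1 * ((fderiv ℝ G q) (Pi.single s 1, 0) * F q))
      = (∑ s, π m s q.1 * (fderiv ℝ G q) (Pi.single s 1, 0)) * F q by
    rw [Finset.sum_mul]; exact Finset.sum_congr rfl fun s _ => by ring]
  rw [show (∑ s, π m s q.1 * (G q * (fderiv ℝ F q) (Pi.single s 1, 0)))
      = G q * ∑ s, π m s q.1 * (fderiv ℝ F q) (Pi.single s 1, 0) by
    rw [Finset.mul_sum]; exact Finset.sum_congr rfl fun s _ => by ring]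
  rw [show (∑ s, A m s q * ((fderiv ℝ G q) (0, Pi.single s 1) * F q))
      = (∑ s, A m s q * (fderiv ℝ G q) (0, Pi.single s 1)) * F q by
    rw [Finset.sum_mul]; exact Finset.sum_congr rfl fun s _ => by ring]
  rw [show (∑ s, A m s q * (G q * (fderiv ℝ F q) (0, Pi.single s 1)))
      = G q * ∑ s, A m s q * (fderiv ℝ F q) (0, Pi.single s 1) by
    rw [Finset.mul_sum]; exact Finset.sum_congr rfl fun s _ => by ring]
  ring

lemma Dop_add (m : Fin n) (G F : Pt n → ℝ) (hG : ContDiff ℝ (⊤ : ℕ∞) G)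
    (hF : ContDiff ℝ (⊤ : ℕ∞) F) (q : Pt n) :
    Dop π A m (fun r => G r + F r) q = Dop π A m G q + Dop π A m F q := by
  have hG' := (hG.differentiable (by simp)).differentiableAt (x := q)
  have hF' := (hF.differentiable (by simp)).differentiableAt (x := q)
  unfold Dop
  simp only [pdx, pdxi, fd_add G F q hG' hF']
  simp only [mul_add, Finset.sum_add_distrib]
  ring

omit hπ in
include hπ in
lemma Dop_fst (m : Fin n) (g : (Fin n → ℝ) → ℝ) (hg : ContDiff ℝ (⊤ : ℕ∞) g) (q : Pt n) :
    Dop π A m (fun r : Pt n => g r.1) q = ∑ s, π m s q.1 * pd s g q.1 := by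
  unfold Dop
  simp only [pdx_fst g hg, pdxi_fst g hg, mul_zero, Finset.sum_const_zero, sub_zero]

include hπ in
lemma Dop_Ph (m i : Fin n) (q : Pt n) :
    Dop π A m (Ph π i) q = Efun π A m i q := by
  unfold Dop Efun
  rw [Ph_eq_Hf]
  refine congrArg₂ _ (Finset.sum_congr rfl fun s _ => ?_) (Finset.sum_congr rfl fun s _ => ?_)
  · rw [pdx_Hf _ (fun t => hπ i t)]
  · rw [pdxi_Hf _ (fun t => hπ i t)]

include hπ hA in
lemma pdxi_Efun (m i k : Fin n) (p : Pt n) :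
    pdxi k (Efun π A m i) p
      = ∑ s, π m s p.1 * pd s (π i k) p.1 - ∑ s, pdxi k (A m s) p * π i s p.1 := by
  have hsm1 : ∀ s : Fin n, ContDiff ℝ (⊤ : ℕ∞)
      (fun q : Pt n => π m s q.1 * (∑ t, pd s (π i t) q.1 * q.2 t)) := fun s =>
    (smooth_fst _ (hπ m s)).mul (smooth_Hf _ fun t => smooth_pd _ (hπ i t) s)
  have hsm2 : ∀ s : Fin n, ContDiff ℝ (⊤ : ℕ∞)
      (fun q : Pt n => A m s q * π i s q.1) := fun s =>
    (hA m s).mul (smooth_fst _ (hπ i s))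
  have d1 : ∀ (s : Fin n) (q : Pt n), DifferentiableAt ℝ
      (fun q : Pt n => π m s q.1 * (∑ t, pd s (π i t) q.1 * q.2 t)) q := fun s q =>
    ((hsm1 s).differentiable (by simp)).differentiableAt
  have d2 : ∀ (s : Fin n) (q : Pt n), DifferentiableAt ℝ
      (fun q : Pt n => A m s q * π i s q.1) q := fun s q =>
    ((hsm2 s).differentiable (by simp)).differentiableAt
  unfold Efun
  rw [show (fun q : Pt n => ∑ s, π m s q.1 * (∑ t, pd s (π i t) q.1 * q.2 t)
        - ∑ s, A m s q * π i s q.1)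
      = fun q : Pt n => (∑ s, (fun r : Pt n => π m s r.1 * (∑ t, pd s (π i t) r.1 * r.2 t)) q)
        - (∑ s, (fun r : Pt n => A m s r * π i s r.1) q) from rfl]
  rw [pdxi, fd_sub _ _ p
    (DifferentiableAt.fun_sum fun s _ => d1 s p) (DifferentiableAt.fun_sum fun s _ => d2 s p),
    fd_sum _ p (fun s => d1 s p), fd_sum _ p (fun s => d2 s p)]
  refine congrArg₂ _ (Finset.sum_congr rfl fun s _ => ?_) (Finset.sum_congr rfl fun s _ => ?_)
  · have hdg : DifferentiableAt ℝ (fun r : Pt n => ∑ t, pd s (π i t) r.1 * r.2 t) p :=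
      (((smooth_Hf _ fun t => smooth_pd _ (hπ i t) s)).differentiable (by simp)).differentiableAt
    rw [fd_mul (fun r : Pt n => π m s r.1) (fun r : Pt n => ∑ t, pd s (π i t) r.1 * r.2 t) p
      ((smooth_fst _ (hπ m s)).differentiable (by simp)).differentiableAt hdg]
    rw [fd_fst _ p (((hπ m s).differentiable (by simp)).differentiableAt)]
    have := pdxi_Hf (fun t => pd s (π i t)) (fun t => smooth_pd _ (hπ i t) s) k p
    rw [pdxi] at this
    rw [show (fderiv ℝ (fun r : Pt n => ∑ t, pd s (π i t) r.1 * r.2 t) p) (0, Pi.single k 1)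
        = (fderiv ℝ (Hf (fun t => pd s (π i t))) p) (0, Pi.single k 1) from rfl, this]
    simp
  · rw [fd_mul (A m s) (fun r : Pt n => π i s r.1) p
      (((hA m s).differentiable (by simp)).differentiableAt)
      ((smooth_fst _ (hπ i s)).differentiable (by simp)).differentiableAt]
    rw [fd_fst _ p (((hπ i s).differentiable (by simp)).differentiableAt)]
    simp [pdxi]

end NLC
namespace NLC
section main
variable {n : ℕ} {π : Fin n → Fin n → (Fin n → ℝ) → ℝ}
  {A : Fin n → Fin n → (Fin n → ℝ) × (Fin n → ℝ) → ℝ}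
  (hπ : ∀ i j, ContDiff ℝ (⊤ : ℕ∞) (π i j))
  (hanti : ∀ i j (x : Fin n → ℝ), π i j x = -π j i x)
  (hA : ∀ i s, ContDiff ℝ (⊤ : ℕ∞) (A i s))

include hπ hanti hA in
lemma master (m i j : Fin n) (F : Pt n → ℝ) (hF : ContDiff ℝ (⊤ : ℕ∞) F) (p : Pt n) :
    ((Dop π A m (fun q => Ph π i q * pdxi j F q) p
            - Ph π i p * Dop π A m (fun q => pdxi j F q) p)
          - pdxi j (fun q => Dop π A m (fun r => Ph π i r * F r) q
              - Ph π i q * Dop π A m F q) p)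
      - ((Dop π A m (fun q => pdxi i (fun r => Ph π j r * F r) q) p
            - pdxi i (fun q => Dop π A m (fun r => Ph π j r * F r) q) p)
          - Ph π j p * (Dop π A m (fun q => pdxi i F q) p
              - pdxi i (fun q => Dop π A m F q) p))
    = -(∑ s, π m s p.1 * pd s (π i j) p.1
          - ∑ s, pdxi i (A m s) p * π s j p.1
          - ∑ s, pdxi j (A m s) p * π i s p.1) * F p := by
  have dtop : ((⊤ : ℕ∞) : WithTop ℕ∞) ≠ 0 := by simp
  have hPh : ∀ k, ContDiff ℝ (⊤ : ℕ∞) (Ph π k) := fun k => smooth_Hf (π k) (fun t => hπ k t)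
  have hT : ∀ k, ContDiff ℝ (⊤ : ℕ∞) (fun q : Pt n => pdxi k F q) := fun k => smooth_pdxi F hF k
  have hDF : ContDiff ℝ (⊤ : ℕ∞) (Dop π A m F) := smooth_Dop π A hπ hA m F hF
  have hE : ∀ k, ContDiff ℝ (⊤ : ℕ∞) (Efun π A m k) := fun k => smooth_Efun π A hπ hA m k
  have dF : ∀ q : Pt n, DifferentiableAt ℝ F q :=
    fun q => (hF.differentiable (by simp)).differentiableAt
  have dE : ∀ k (q : Pt n), DifferentiableAt ℝ (Efun π A m k) q :=
    fun k q => ((hE k).differentiable (by simp)).differentiableAt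
  have dPh : ∀ k (q : Pt n), DifferentiableAt ℝ (Ph π k) q :=
    fun k q => ((hPh k).differentiable (by simp)).differentiableAt
  have dT : ∀ k (q : Pt n), DifferentiableAt ℝ (fun r : Pt n => pdxi k F r) q :=
    fun k q => ((hT k).differentiable (by simp)).differentiableAt
  have dDF : ∀ q : Pt n, DifferentiableAt ℝ (Dop π A m F) q :=
    fun q => (hDF.differentiable (by simp)).differentiableAt
  -- pdxi of Ph
  have pdxiPh : ∀ k l (q : Pt n),
      fderiv ℝ (Ph π k) q (0, Pi.single l 1) = π k l q.1 := fun k l q => by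
    have := pdxi_Hf (π k) (fun t => hπ k t) l q
    rw [pdxi] at this
    exact this
  -- LHS pieces
  have h1 : Dop π A m (fun q => Ph π i q * pdxi j F q) p
      = Dop π A m (Ph π i) p * pdxi j F p + Ph π i p * Dop π A m (fun q => pdxi j F q) p :=
    Dop_mul π A m (Ph π i) (fun q => pdxi j F q) (hPh i) (hT j) p
  have h1' : Dop π A m (fun q => Ph π i q * pdxi j F q) p
      = Efun π A m i p * pdxi j F p + Ph π i p * Dop π A m (fun q => pdxi j F q) p := by
    rw [h1, Dop_Ph π A hπ m i p]
  have h2 : (fun q => Dop π A m (fun r => Ph π i r * F r) q - Ph π i q * Dop π A m F q)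
      = fun q => Efun π A m i q * F q := funext fun q => by
    rw [show Dop π A m (fun r => Ph π i r * F r) q
        = Dop π A m (Ph π i) q * F q + Ph π i q * Dop π A m F q from
      Dop_mul π A m (Ph π i) F (hPh i) hF q, Dop_Ph π A hπ m i q]
    ring
  have h3 : pdxi j (fun q => Efun π A m i q * F q) p
      = pdxi j (Efun π A m i) p * F p + Efun π A m i p * pdxi j F p := by
    simp only [pdxi]
    exact fd_mul (Efun π A m i) F p (dE i p) (dF p) _
  -- RHS pieces
  have h4 : (fun q => pdxi i (fun r => Ph π j r * F r) q)
      = fun q => π j i q.1 * F q + Ph π j q * pdxi i F q := funext fun q => by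
    simp only [pdxi]
    rw [fd_mul (Ph π j) F q (dPh j q) (dF q), pdxiPh j i q]
  have h5a : Dop π A m (fun q => π j i q.1 * F q + Ph π j q * pdxi i F q) p
      = Dop π A m (fun q : Pt n => π j i q.1 * F q) p
        + Dop π A m (fun q => Ph π j q * pdxi i F q) p :=
    Dop_add π A m (fun q : Pt n => π j i q.1 * F q) (fun q => Ph π j q * pdxi i F q)
      ((smooth_fst _ (hπ j i)).mul hF) ((hPh j).mul (hT i)) p
  have h5b : Dop π A m (fun q : Pt n => π j i q.1 * F q) p
      = Dop π A m (fun q : Pt n => π j i q.1) p * F p + π j i p.1 * Dop π A m F p :=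
    Dop_mul π A m (fun q : Pt n => π j i q.1) F (smooth_fst _ (hπ j i)) hF p
  have h5c : Dop π A m (fun q : Pt n => π j i q.1) p = ∑ s, π m s p.1 * pd s (π j i) p.1 :=
    Dop_fst π A hπ m (π j i) (hπ j i) p
  have h5d : Dop π A m (fun q => Ph π j q * pdxi i F q) p
      = Efun π A m j p * pdxi i F p + Ph π j p * Dop π A m (fun q => pdxi i F q) p := by
    rw [Dop_mul π A m (Ph π j) (fun q => pdxi i F q) (hPh j) (hT i) p, Dop_Ph π A hπ m j p]
  have h5 : Dop π A m (fun q => π j i q.1 * F q + Ph π j q * pdxi i F q) p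
      = (∑ s, π m s p.1 * pd s (π j i) p.1) * F p + π j i p.1 * Dop π A m F p
        + Efun π A m j p * pdxi i F p + Ph π j p * Dop π A m (fun q => pdxi i F q) p := by
    rw [h5a, h5b, h5c, h5d]; ring
  have h2j : (fun q => Dop π A m (fun r => Ph π j r * F r) q)
      = fun q => Efun π A m j q * F q + Ph π j q * Dop π A m F q := funext fun q => by
    rw [show Dop π A m (fun r => Ph π j r * F r) q
        = Dop π A m (Ph π j) q * F q + Ph π j q * Dop π A m F q from
      Dop_mul π A m (Ph π j) F (hPh j) hF q, Dop_Ph π A hπ m j q]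
  have h6 : pdxi i (fun q => Efun π A m j q * F q + Ph π j q * Dop π A m F q) p
      = pdxi i (Efun π A m j) p * F p + Efun π A m j p * pdxi i F p
        + π j i p.1 * Dop π A m F p + Ph π j p * pdxi i (fun q => Dop π A m F q) p := by
    simp only [pdxi]
    rw [fd_add (fun q => Efun π A m j q * F q) (fun q => Ph π j q * Dop π A m F q) p
      ((dE j p).mul (dF p)) ((dPh j p).mul (dDF p)),
      fd_mul (Efun π A m j) F p (dE j p) (dF p),
      fd_mul (Ph π j) (Dop π A m F) p (dPh j p) (dDF p), pdxiPh j i p]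
    ring
  -- assemble
  rw [h1', h2, h3, h4, h5, h2j, h6,
    pdxi_Efun π A hπ hA m i j p, pdxi_Efun π A hπ hA m j i p]
  have hS : (∑ s, pdxi i (A m s) p * π s j p.1)
      = -∑ s, pdxi i (A m s) p * π j s p.1 := by
    rw [← Finset.sum_neg_distrib]
    exact Finset.sum_congr rfl fun s _ => by rw [hanti s j]; ring
  rw [hS]
  ring

end main
end NLC

/-- A nonlinear contravariant connection `D` is Poisson, i.e.
`[[D^{dx^m}, (#dx^i)^], (dx^j)^] = [[D^{dx^m}, (dx^i)^], (#dx^j)^]` as operators on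
smooth functions, if and only if
`π^{ms} ∂π^{ij}/∂x^s − (∂A^m_s/∂ξ_i) π^{sj} − (∂A^m_s/∂ξ_j) π^{is} = 0`. -/
theorem nonlinear_connection_poisson_iff
    (n : ℕ) (π : Fin n → Fin n → (Fin n → ℝ) → ℝ)
    (A : Fin n → Fin n → (Fin n → ℝ) × (Fin n → ℝ) → ℝ)
    (hπ : ∀ i j, ContDiff ℝ (⊤ : ℕ∞) (π i j))
    (hanti : ∀ i j (x : Fin n → ℝ), π i j x = -π j i x)
    (hA : ∀ i s, ContDiff ℝ (⊤ : ℕ∞) (A i s)) :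
    (∀ m i j (F : (Fin n → ℝ) × (Fin n → ℝ) → ℝ), ContDiff ℝ (⊤ : ℕ∞) F →
      ∀ p : (Fin n → ℝ) × (Fin n → ℝ),
        (Dop π A m (fun q => Ph π i q * pdxi j F q) p
            - Ph π i p * Dop π A m (fun q => pdxi j F q) p)
          - pdxi j (fun q => Dop π A m (fun r => Ph π i r * F r) q
              - Ph π i q * Dop π A m F q) p
        = (Dop π A m (fun q => pdxi i (fun r => Ph π j r * F r) q) p
            - pdxi i (fun q => Dop π A m (fun r => Ph π j r * F r) q) p)
          - Ph π j p * (Dop π A m (fun q => pdxi i F q) p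
              - pdxi i (fun q => Dop π A m F q) p))
    ↔ (∀ m i j (p : (Fin n → ℝ) × (Fin n → ℝ)),
        ∑ s, π m s p.1 * pd s (π i j) p.1
          - ∑ s, pdxi i (A m s) p * π s j p.1
          - ∑ s, pdxi j (A m s) p * π i s p.1 = 0) := by

  constructor
  · intro h m i j p
    have hm := NLC.master hπ hanti hA m i j (fun _ => (1:ℝ)) contDiff_const p
    rw [h m i j (fun _ => (1:ℝ)) contDiff_const p] at hm
    simp only [sub_self, mul_one] at hm
    linarith [hm]
  · intro h m i j F hF p
    have hm := NLC.master hπ hanti hA m i j F hF p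
    rw [h m i j p] at hm
    simp only [neg_zero, zero_mul] at hm
    linarith [hm]
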